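/- Let K be a natural number, let c = (c_1, …, c_K) be a vector of natural numbers with c_i ≤ K for all i, set ℓ(c) = ∑_{i=1}^K c_i, and suppose ℓ(c) < K. Let j ≥ 1 be the number of indices i with c_i ≥ 1. Then ∏_{i=1}^K c_i!·(K − c_i)! ≤ (ℓ(c) − j + 1)!·(K − ℓ(c) + j − 1)!·((K − 1)!)^{j−1}·(K!)^{K−j}. -/

import Mathlib

open Nat Finset

lemma fac_shift (k : ℕ) : ∀ x y : ℕ, k ≤ x → x ≤ y + 1 →
    x ! * y ! ≤ (x - k)! * (y + k)! := by
  induction k with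
  | zero => intro x y _ _; simp
  | succ k ih =>
    intro x y hk hxy
    have hx1 : 1 ≤ x := le_trans (Nat.succ_le_succ (Nat.zero_le k)) hk
    have step : x ! * y ! ≤ (x - 1)! * (y + 1)! := by
      calc x ! * y ! = x * ((x-1)! * y !) := by
            rw [← Nat.mul_factorial_pred (by omega : x ≠ 0)]; ring
        _ ≤ (y + 1) * ((x-1)! * y !) := Nat.mul_le_mul_right _ hxy
        _ = (x-1)! * ((y+1) * y !) := by ring
        _ = (x-1)! * (y+1)! := by rw [Nat.factorial_succ]
    have h2 : x - 1 - k = x - (k+1) := by omega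
    have h3 : y + 1 + k = y + (k+1) := by omega
    calc x ! * y ! ≤ (x-1)! * (y+1)! := step
      _ ≤ (x - 1 - k)! * (y + 1 + k)! := ih (x-1) (y+1) (by omega) (by omega)
      _ = (x - (k+1))! * (y + (k+1))! := by rw [h2, h3]

lemma fac_extreme {a b : ℕ} (ha : 1 ≤ a) (hab : a ≤ b) :
    a ! * b ! ≤ (a + b - 1)! := by
  have := fac_shift (a - 1) a b (by omega) (by omega)
  have h1 : a - (a - 1) = 1 := by omega
  have h2 : b + (a - 1) = a + b - 1 := by omega
  rw [h1, h2] at this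
  simpa using this

lemma part1 (a b : ℕ) (ha : 1 ≤ a) (hb : 1 ≤ b) :
    a ! * b ! ≤ (a + b - 1)! := by
  rcases le_total a b with h | h
  · exact fac_extreme ha h
  · have := fac_extreme hb h
    rw [mul_comm] at this
    rwa [Nat.add_comm b a] at this

lemma part2 (K a b : ℕ) (ha : 1 ≤ a) (hb : 1 ≤ b) (haK : a ≤ K) (hbK : b ≤ K)
    (hab : a + b ≤ K + 1) :
    (K - a)! * (K - b)! ≤ (K - (a + b - 1))! * (K - 1)! := by
  rcases le_total b a with h | h
  · have := fac_shift (K - 1 - (K - b)) (K - a) (K - b) (by omega) (by omega)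
    have h1 : K - a - (K - 1 - (K - b)) = K - (a + b - 1) := by omega
    have h2 : K - b + (K - 1 - (K - b)) = K - 1 := by omega
    rwa [h1, h2] at this
  · have := fac_shift (K - 1 - (K - a)) (K - b) (K - a) (by omega) (by omega)
    have h1 : K - b - (K - 1 - (K - a)) = K - (a + b - 1) := by omega
    have h2 : K - a + (K - 1 - (K - a)) = K - 1 := by omega
    rw [h1, h2] at this
    rwa [mul_comm ((K-a)!) ((K-b)!)]

lemma merge (K a b : ℕ) (ha : 1 ≤ a) (hb : 1 ≤ b) (haK : a ≤ K) (hbK : b ≤ K)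
    (hab : a + b ≤ K + 1) :
    a ! * (K - a)! * (b ! * (K - b)!)
      ≤ (a + b - 1)! * (K - (a + b - 1))! * (K - 1)! := by
  calc a ! * (K - a)! * (b ! * (K - b)!)
      = (a ! * b !) * ((K - a)! * (K - b)!) := by ring
    _ ≤ (a + b - 1)! * ((K - (a + b - 1))! * (K - 1)!) :=
        Nat.mul_le_mul (part1 a b ha hb) (part2 K a b ha hb haK hbK hab)
    _ = (a + b - 1)! * (K - (a + b - 1))! * (K - 1)! := by ring

lemma key {ι : Type*} (K : ℕ) (s : Finset ι) (hs : s.Nonempty) (f : ι → ℕ)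
    (h1 : ∀ i ∈ s, 1 ≤ f i) (hsum : ∑ i ∈ s, f i ≤ K) :
    ∏ i ∈ s, (f i)! * (K - f i)!
      ≤ ((∑ i ∈ s, f i) - s.card + 1)! * (K - (∑ i ∈ s, f i) + s.card - 1)! *
        ((K - 1)!) ^ (s.card - 1) := by
  induction hs using Finset.Nonempty.cons_induction with
  | singleton a =>
    simp only [Finset.prod_singleton, Finset.sum_singleton, Finset.card_singleton]
    have h := h1 a (Finset.mem_singleton_self a)
    have e1 : f a - 1 + 1 = f a := by omega
    have e2 : K - f a + 1 - 1 = K - f a := by omega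
    rw [e1, e2]; simp
  | cons a s ha hne ih =>
    have h1' : ∀ i ∈ s, 1 ≤ f i := fun i hi => h1 i (Finset.mem_cons_of_mem hi)
    have hfa : 1 ≤ f a := h1 a (Finset.mem_cons_self a s)
    have hsc : ∑ i ∈ Finset.cons a s ha, f i = f a + ∑ i ∈ s, f i :=
      Finset.sum_cons ha
    have hsum' : ∑ i ∈ s, f i ≤ K := by omega
    have hjS : s.card ≤ ∑ i ∈ s, f i := by
      calc s.card = ∑ _i ∈ s, 1 := by simp
        _ ≤ ∑ i ∈ s, f i := Finset.sum_le_sum h1'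
    have hj1 : 1 ≤ s.card := Finset.card_pos.mpr hne
    set S := ∑ i ∈ s, f i with hS
    set j := s.card with hjdef
    set m := S - j + 1 with hm
    have hm1 : 1 ≤ m := by omega
    have hmK : m ≤ K := by omega
    have hfaK : f a ≤ K := by omega
    have habK : f a + m ≤ K + 1 := by omega
    have hKm : K - S + j - 1 = K - m := by omega
    have hcard : (Finset.cons a s ha).card = j + 1 := by
      rw [Finset.card_cons]
    have hmerge := merge K (f a) m hfa hm1 hfaK hmK habK
    calc ∏ i ∈ Finset.cons a s ha, (f i)! * (K - f i)!
        = (f a)! * (K - f a)! * ∏ i ∈ s, (f i)! * (K - f i)! :=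
          Finset.prod_cons ha
      _ ≤ (f a)! * (K - f a)! * (m ! * (K - S + j - 1)! * ((K-1)!) ^ (j - 1)) :=
          Nat.mul_le_mul_left _ (ih h1' hsum')
      _ = ((f a)! * (K - f a)! * (m ! * (K - m)!)) * ((K-1)!) ^ (j - 1) := by
          rw [hKm]; ring
      _ ≤ ((f a + m - 1)! * (K - (f a + m - 1))! * (K-1)!) * ((K-1)!) ^ (j - 1) :=
          Nat.mul_le_mul_right _ hmerge
      _ = (f a + m - 1)! * (K - (f a + m - 1))! * ((K-1)!) ^ j := by
          have : ((K-1)!) * ((K-1)!) ^ (j - 1) = ((K-1)!) ^ j := by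
            rw [← pow_succ']
            congr 1
            omega
          rw [mul_assoc, this]
      _ = ((∑ i ∈ Finset.cons a s ha, f i) - (Finset.cons a s ha).card + 1)! *
            (K - (∑ i ∈ Finset.cons a s ha, f i) + (Finset.cons a s ha).card - 1)! *
            ((K-1)!) ^ ((Finset.cons a s ha).card - 1) := by
          rw [hsc, hcard]
          have e1 : f a + m - 1 = f a + S - (j + 1) + 1 := by omega
          have e2 : K - (f a + m - 1) = K - (f a + S) + (j + 1) - 1 := by omega
          rw [← e1, ← e2, Nat.add_sub_cancel]

theorem stmt_5 (K : ℕ) (c : Fin K → ℕ) (hc : ∀ i, c i ≤ K)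
    (hℓ : ∑ i, c i < K) (j : ℕ)
    (hj : j = (Finset.univ.filter fun i => 1 ≤ c i).card) (hj1 : 1 ≤ j) :
    ∏ i, Nat.factorial (c i) * Nat.factorial (K - c i)
      ≤ Nat.factorial ((∑ i, c i) - j + 1) *
          Nat.factorial (K - (∑ i, c i) + j - 1) *
          Nat.factorial (K - 1) ^ (j - 1) *
          Nat.factorial K ^ (K - j) := by
  classical
  set S := Finset.univ.filter (fun i => 1 ≤ c i) with hSdef
  have hSne : S.Nonempty := Finset.card_pos.mp (by omega)
  have hzero : ∀ i ∈ Finset.univ, i ∉ S → c i = 0 := by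
    intro i _ hi
    simp only [hSdef, Finset.mem_filter, Finset.mem_univ, true_and] at hi
    omega
  have hsumeq : ∑ i ∈ S, c i = ∑ i, c i :=
    Finset.sum_subset (Finset.filter_subset _ _) (fun i hi h => hzero i hi h)
  have h1 : ∀ i ∈ S, 1 ≤ c i := by
    intro i hi
    simpa [hSdef] using (Finset.mem_filter.mp hi).2
  have hsum : ∑ i ∈ S, c i ≤ K := by omega
  have hprodsplit :
      (∏ i ∈ S, (c i)! * (K - c i)!) *
        ∏ i ∈ Finset.univ.filter (fun i => ¬ 1 ≤ c i), (c i)! * (K - c i)! =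
        ∏ i, (c i)! * (K - c i)! :=
    Finset.prod_filter_mul_prod_filter_not _ _ _
  have hcompl : ∏ i ∈ Finset.univ.filter (fun i => ¬ 1 ≤ c i), (c i)! * (K - c i)!
      = (K !) ^ (K - j) := by
    have hall : ∀ i ∈ Finset.univ.filter (fun i => ¬ 1 ≤ c i),
        (c i)! * (K - c i)! = K ! := by
      intro i hi
      have : c i = 0 := by
        have := (Finset.mem_filter.mp hi).2
        omega
      simp [this]
    rw [Finset.prod_congr rfl hall, Finset.prod_const]
    congr 1
    have := Finset.card_filter_add_card_filter_not (s := (Finset.univ : Finset (Fin K))) (p := fun i => 1 ≤ c i)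
    simp only [Finset.card_univ, Fintype.card_fin] at this
    rw [← hSdef] at this
    omega
  have hkey := key K S hSne c h1 hsum
  rw [hsumeq, ← hj] at hkey
  calc ∏ i, (c i)! * (K - c i)!
      = (∏ i ∈ S, (c i)! * (K - c i)!) * (K !) ^ (K - j) := by
        rw [← hprodsplit, hcompl]
    _ ≤ ((∑ i, c i) - j + 1)! * (K - (∑ i, c i) + j - 1)! * ((K-1)!) ^ (j - 1) *
          (K !) ^ (K - j) := by
        exact Nat.mul_le_mul_right _ hkey
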